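/- Let Π be the 6×6 projector with entries Π_{ij} = (1/2)⟨a_i, a_j⟩ where a_i are the six vectors (1,1,0)/√2, (1,0,1)/√2, (0,1,1)/√2, (1,−1,0)/√2, (1,0,−1)/√2, (0,1,−1)/√2 in ℂ³. Then g(Π) := sup over complex |s_i| ≤ 1, |t_j| ≤ 1 of |∑_{i,j} Π_{ij} s_i t_j| satisfies g(Π) < 6. -/

import Mathlib

set_option maxHeartbeats 1000000

open Complex

/- ### Scalar certificate lemmas -/

lemma caseA_core (a b c q1 q2 q3 s : ℝ)
    (hq1 : q1^2 ≤ 4*(a+b)) (hq2 : q2^2 ≤ 4*(a+c)) (hq3 : q3^2 ≤ 4*(b+c))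
    (hsmall : 10*b ≤ a+b+c) (hs : s^2 = a+b+c) :
    (q1+q2+q3)*s ≤ (2449/500)*(a+b+c) := by
  nlinarith [sq_nonneg (q1 - (71/50)*s), sq_nonneg (q2 - 2*s), sq_nonneg (q3 - (71/50)*s)]

lemma caseB_core (a b c q1 q2 q3 D s : ℝ)
    (hc : 0 ≤ c)
    (hq1 : q1^2 ≤ 2*(a+b) + 2*D) (hq2 : q2^2 ≤ 4*(a+c)) (hq3 : q3^2 ≤ 4*(b+c))
    (hD0 : 0 ≤ D) (hD2 : D^2 ≤ (a+b)^2 - (a+b+c)^2/100)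
    (hab0 : 0 ≤ a + b)
    (hs : s^2 = a+b+c) :
    (q1+q2+q3)*s ≤ (2449/500)*(a+b+c) := by
  have h200 : 200*(a+b)*D ≤ 200*(a+b)^2 - (a+b+c)^2 := by
    nlinarith [sq_nonneg (a+b-D)]
  have hsum : 2*(a+b) + 2*D + 4*(a+c) + 4*(b+c) ≤ (7996/1000)*(a+b+c) := by
    rcases eq_or_lt_of_le hab0 with h|h
    · have hb : b = -a := by linarith
      subst hb
      nlinarith [hD2, sq_nonneg (c - D), sq_nonneg D, sq_nonneg c]
    · nlinarith [h200, mul_nonneg hab0 hc, sq_nonneg (a+b), sq_nonneg c, mul_pos h h]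
  nlinarith [sq_nonneg (q1 - (1633/1000)*s), sq_nonneg (q2 - (1633/1000)*s),
    sq_nonneg (q3 - (1633/1000)*s)]

lemma prod_step (n1 n2 N : ℝ) (hN : 0 ≤ N) (h1 : N/10 < n1) (h2 : N/10 < n2) :
    N^2/100 ≤ n1*n2 := by
  nlinarith [mul_pos (sub_pos.2 h1) (sub_pos.2 h2),
    mul_le_mul_of_nonneg_left h1.le hN, mul_le_mul_of_nonneg_left h2.le hN]

lemma div_step (P C s : ℝ) (hs : 0 < s) (h : P*s ≤ C*s^2) : P ≤ C*s := by
  nlinarith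

lemma gram_pigeonhole (n1 n2 n3 r12 r13 r23 : ℝ)
    (h1 : 0 < n1) (h2 : 0 < n2) (h3 : 0 < n3)
    (hdet : n1*n2*n3 + 2*(r12*r13*r23) = n1*r23^2 + n2*r13^2 + n3*r12^2) :
    n1*n2/4 ≤ r12^2 ∨ n1*n3/4 ≤ r13^2 ∨ n2*n3/4 ≤ r23^2 := by
  by_contra h
  push_neg at h
  obtain ⟨a1, a2, a3⟩ := h
  have hP : 0 < n1*n2*n3 := by positivity
  have hs0 : 0 ≤ n1*r23^2 + n2*r13^2 + n3*r12^2 := by positivity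
  have hslt : n1*r23^2 + n2*r13^2 + n3*r12^2 < (3/4)*(n1*n2*n3) := by
    nlinarith [mul_lt_mul_of_pos_left a3 h1, mul_lt_mul_of_pos_left a2 h2,
      mul_lt_mul_of_pos_left a1 h3]
  have hRneg : r12*r13*r23 < -(n1*n2*n3)/8 := by linarith
  have hRsq : (n1*n2*n3)^2/64 < (r12*r13*r23)^2 := by
    nlinarith [mul_pos (show (0:ℝ) < -(r12*r13*r23) - (n1*n2*n3)/8 by linarith)
      (show (0:ℝ) < -(r12*r13*r23) + (n1*n2*n3)/8 by nlinarith)]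
  have e1 : r12^2*r13^2 < (n1*n2/4)*(n1*n3/4) :=
    mul_lt_mul'' a1 a2 (sq_nonneg _) (sq_nonneg _)
  have e2 : (r12^2*r13^2)*r23^2 < ((n1*n2/4)*(n1*n3/4))*(n2*n3/4) :=
    mul_lt_mul'' e1 a3 (by positivity) (sq_nonneg _)
  nlinarith [e2, hRsq]

/- ### Complex identities -/

lemma pair_sq (z w : ℂ) :
    (‖z+w‖ + ‖z-w‖)^2
      = 2*(normSq z + normSq w) + 2 * ‖z^2 - w^2‖ := by
  have h1 : ‖z+w‖ ^ 2 = normSq (z+w) := Complex.sq_norm _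
  have h2 : ‖z-w‖ ^ 2 = normSq (z-w) := Complex.sq_norm _
  have h3 : ‖z+w‖ * ‖z-w‖ = ‖z^2 - w^2‖ := by
    rw [← norm_mul]; congr 1; ring
  have h4 : normSq (z+w) + normSq (z-w) = 2*(normSq z + normSq w) := by
    simp [normSq_apply, add_re, add_im, sub_re, sub_im]; ring
  nlinarith [h1, h2, h3, h4]

lemma pair_D_le (z w : ℂ) : ‖z^2 - w^2‖ ≤ normSq z + normSq w := by
  have hz : ‖z^2‖ = normSq z := by
    rw [show z^2 = z*z by ring, norm_mul, ← Complex.sq_norm]; ring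
  have hw : ‖w^2‖ = normSq w := by
    rw [show w^2 = w*w by ring, norm_mul, ← Complex.sq_norm]; ring
  have h := norm_sub_le (z^2) (w^2)
  linarith

lemma pair_D_sq (z w : ℂ) :
    ‖z^2 - w^2‖ ^ 2
      = (normSq z + normSq w)^2 - 4 * ((z * (starRingEnd ℂ) w).re)^2 := by
  rw [Complex.sq_norm]
  simp [normSq_apply, mul_re, mul_im, conj_re, conj_im, sub_re, sub_im, pow_two]
  ring

lemma det_gram (v1 v2 v3 : ℂ) :
    normSq v1 * normSq v2 * normSq v3
      + 2*((v1 * (starRingEnd ℂ) v2).re * (v1 * (starRingEnd ℂ) v3).re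
            * (v2 * (starRingEnd ℂ) v3).re)
      = normSq v1 * ((v2 * (starRingEnd ℂ) v3).re)^2
        + normSq v2 * ((v1 * (starRingEnd ℂ) v3).re)^2
        + normSq v3 * ((v1 * (starRingEnd ℂ) v2).re)^2 := by
  simp [normSq_apply, mul_re, conj_re, conj_im]
  ring

/- ### The key norm inequality -/

lemma key (v1 v2 v3 : ℂ) :
    (‖v1+v2‖ + ‖v1-v2‖) + (‖v1+v3‖ + ‖v1-v3‖)
      + (‖v2+v3‖ + ‖v2-v3‖)
      ≤ (2449/500) * Real.sqrt (normSq v1 + normSq v2 + normSq v3) := by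
  set n1 := normSq v1 with hn1def
  set n2 := normSq v2 with hn2def
  set n3 := normSq v3 with hn3def
  have hn1 : 0 ≤ n1 := normSq_nonneg _
  have hn2 : 0 ≤ n2 := normSq_nonneg _
  have hn3 : 0 ≤ n3 := normSq_nonneg _
  set q1 := ‖v1+v2‖ + ‖v1-v2‖ with hq1def
  set q2 := ‖v1+v3‖ + ‖v1-v3‖ with hq2def
  set q3 := ‖v2+v3‖ + ‖v2-v3‖ with hq3def
  set D1 := ‖v1^2 - v2^2‖ with hD1def
  set D2 := ‖v1^2 - v3^2‖ with hD2def
  set D3 := ‖v2^2 - v3^2‖ with hD3def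
  set r12 := (v1 * (starRingEnd ℂ) v2).re with hr12def
  set r13 := (v1 * (starRingEnd ℂ) v3).re with hr13def
  set r23 := (v2 * (starRingEnd ℂ) v3).re with hr23def
  have hq1sq : q1^2 = 2*(n1+n2) + 2*D1 := pair_sq v1 v2
  have hq2sq : q2^2 = 2*(n1+n3) + 2*D2 := pair_sq v1 v3
  have hq3sq : q3^2 = 2*(n2+n3) + 2*D3 := pair_sq v2 v3
  have hD1le : D1 ≤ n1 + n2 := pair_D_le v1 v2
  have hD2le : D2 ≤ n1 + n3 := pair_D_le v1 v3
  have hD3le : D3 ≤ n2 + n3 := pair_D_le v2 v3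
  have hq1' : q1^2 ≤ 4*(n1+n2) := by linarith
  have hq2' : q2^2 ≤ 4*(n1+n3) := by linarith
  have hq3' : q3^2 ≤ 4*(n2+n3) := by linarith
  have hq1pos : 0 ≤ q1 := by positivity
  have hq2pos : 0 ≤ q2 := by positivity
  have hq3pos : 0 ≤ q3 := by positivity
  rcases eq_or_lt_of_le (show (0:ℝ) ≤ n1+n2+n3 by linarith) with hN0 | hNpos
  · -- all three vanish
    have hv1 : v1 = 0 := by
      rw [← normSq_eq_zero (z := v1)]; linarith
    have hv2 : v2 = 0 := by
      rw [← normSq_eq_zero (z := v2)]; linarith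
    have hv3 : v3 = 0 := by
      rw [← normSq_eq_zero (z := v3)]; linarith
    rw [hq1def, hq2def, hq3def, hv1, hv2, hv3]
    simp
  · set s := Real.sqrt (n1+n2+n3) with hsdef
    have hs2 : s^2 = n1+n2+n3 := Real.sq_sqrt (by linarith)
    have hs0 : 0 < s := Real.sqrt_pos.2 hNpos
    suffices h : (q1+q2+q3)*s ≤ (2449/500)*(n1+n2+n3) by
      exact div_step _ _ _ hs0 (by rw [hs2]; exact h)
    rcases le_or_gt n1 ((n1+n2+n3)/10) with hA | hB1
    · have := caseA_core n2 n1 n3 q1 q3 q2 s (by linarith) (by linarith) (by linarith)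
        (by linarith) (by linarith)
      linarith
    rcases le_or_gt n2 ((n1+n2+n3)/10) with hA | hB2
    · have := caseA_core n1 n2 n3 q1 q2 q3 s (by linarith) (by linarith) (by linarith)
        (by linarith) (by linarith)
      linarith
    rcases le_or_gt n3 ((n1+n2+n3)/10) with hA | hB3
    · have := caseA_core n1 n3 n2 q2 q1 q3 s (by linarith) (by linarith) (by linarith)
        (by linarith) (by linarith)
      linarith
    have h1 : 0 < n1 := by linarith
    have h2 : 0 < n2 := by linarith
    have h3 : 0 < n3 := by linarith
    rcases gram_pigeonhole n1 n2 n3 r12 r13 r23 h1 h2 h3 (det_gram v1 v2 v3) with hg | hg | hg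
    · have hprod : (n1+n2+n3)^2/100 ≤ n1*n2 :=
        prod_step _ _ _ (by linarith) (by linarith) (by linarith)
      have hDD : D1^2 ≤ (n1+n2)^2 - (n1+n2+n3)^2/100 := by
        have := pair_D_sq v1 v2
        linarith
      exact caseB_core n1 n2 n3 q1 q2 q3 D1 s hn3 (by linarith) (by linarith) (by linarith)
        (by positivity) hDD (by linarith) (by linarith)
    · have hprod : (n1+n2+n3)^2/100 ≤ n1*n3 :=
        prod_step _ _ _ (by linarith) (by linarith) (by linarith)
      have hDD : D2^2 ≤ (n1+n3)^2 - (n1+n2+n3)^2/100 := by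
        have := pair_D_sq v1 v3
        linarith
      have := caseB_core n1 n3 n2 q2 q1 q3 D2 s hn2 (by linarith) (by linarith) (by linarith)
        (by positivity) (by linarith [hDD]) (by linarith) (by linarith)
      linarith
    · have hprod : (n1+n2+n3)^2/100 ≤ n2*n3 :=
        prod_step _ _ _ (by linarith) (by linarith) (by linarith)
      have hDD : D3^2 ≤ (n2+n3)^2 - (n1+n2+n3)^2/100 := by
        have := pair_D_sq v2 v3
        linarith
      have := caseB_core n2 n3 n1 q3 q1 q2 D3 s hn1 (by linarith) (by linarith) (by linarith)
        (by positivity) (by linarith [hDD]) (by linarith) (by linarith)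
      linarith

/- ### The projector and vectors -/

noncomputable def cohVec : Fin 6 → Fin 3 → ℂ :=
  ![(Real.sqrt 2)⁻¹ • ![1, 1, 0],
    (Real.sqrt 2)⁻¹ • ![1, 0, 1],
    (Real.sqrt 2)⁻¹ • ![0, 1, 1],
    (Real.sqrt 2)⁻¹ • ![1, -1, 0],
    (Real.sqrt 2)⁻¹ • ![1, 0, -1],
    (Real.sqrt 2)⁻¹ • ![0, 1, -1]]

noncomputable def cohProj : Matrix (Fin 6) (Fin 6) ℂ :=
  Matrix.of fun i j => (1 / 2 : ℂ) * ∑ k, (starRingEnd ℂ) (cohVec i k) * cohVec j k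

lemma cohVec_r0 : cohVec 0 = (Real.sqrt 2)⁻¹ • ![1, 1, 0] := by rw [cohVec]; simp
lemma cohVec_r1 : cohVec 1 = (Real.sqrt 2)⁻¹ • ![1, 0, 1] := by rw [cohVec]; simp
lemma cohVec_r2 : cohVec 2 = (Real.sqrt 2)⁻¹ • ![0, 1, 1] := by rw [cohVec]; simp
lemma cohVec_r3 : cohVec 3 = (Real.sqrt 2)⁻¹ • ![1, -1, 0] := by rw [cohVec]; simp
lemma cohVec_r4 : cohVec 4 = (Real.sqrt 2)⁻¹ • ![1, 0, -1] := by rw [cohVec]; simp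
lemma cohVec_r5 : cohVec 5 = (Real.sqrt 2)⁻¹ • ![0, 1, -1] := by
  rw [cohVec, show (5 : Fin 6) = Fin.succ 4 from rfl, Matrix.cons_val_succ]
  simp [Matrix.cons_val_four, Matrix.vecHead, Matrix.vecTail]

lemma conj_smul_row (v : Fin 3 → ℂ) (hv : ∀ k, (starRingEnd ℂ) (v k) = v k) (k : Fin 3) :
    (starRingEnd ℂ) (((Real.sqrt 2)⁻¹ • v) k) = ((Real.sqrt 2)⁻¹ • v) k := by
  simp [Complex.real_smul, Complex.conj_ofReal, hv k]

lemma cohVec_conj (i : Fin 6) (k : Fin 3) :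
    (starRingEnd ℂ) (cohVec i k) = cohVec i k := by
  have h0 : ∀ k : Fin 3, (starRingEnd ℂ) ((![1,1,0] : Fin 3 → ℂ) k) = (![1,1,0] : Fin 3 → ℂ) k := by
    intro k; fin_cases k <;> simp
  have h1 : ∀ k : Fin 3, (starRingEnd ℂ) ((![1,0,1] : Fin 3 → ℂ) k) = (![1,0,1] : Fin 3 → ℂ) k := by
    intro k; fin_cases k <;> simp
  have h2 : ∀ k : Fin 3, (starRingEnd ℂ) ((![0,1,1] : Fin 3 → ℂ) k) = (![0,1,1] : Fin 3 → ℂ) k := by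
    intro k; fin_cases k <;> simp
  have h3 : ∀ k : Fin 3, (starRingEnd ℂ) ((![1,-1,0] : Fin 3 → ℂ) k) = (![1,-1,0] : Fin 3 → ℂ) k := by
    intro k; fin_cases k <;> simp
  have h4 : ∀ k : Fin 3, (starRingEnd ℂ) ((![1,0,-1] : Fin 3 → ℂ) k) = (![1,0,-1] : Fin 3 → ℂ) k := by
    intro k; fin_cases k <;> simp
  have h5 : ∀ k : Fin 3, (starRingEnd ℂ) ((![0,1,-1] : Fin 3 → ℂ) k) = (![0,1,-1] : Fin 3 → ℂ) k := by
    intro k; fin_cases k <;> simp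
  obtain ⟨iv, hi⟩ := i
  interval_cases iv
  · rw [show (⟨0, hi⟩ : Fin 6) = 0 from rfl, cohVec_r0]; exact conj_smul_row _ h0 k
  · rw [show (⟨1, hi⟩ : Fin 6) = 1 from rfl, cohVec_r1]; exact conj_smul_row _ h1 k
  · rw [show (⟨2, hi⟩ : Fin 6) = 2 from rfl, cohVec_r2]; exact conj_smul_row _ h2 k
  · rw [show (⟨3, hi⟩ : Fin 6) = 3 from rfl, cohVec_r3]; exact conj_smul_row _ h3 k
  · rw [show (⟨4, hi⟩ : Fin 6) = 4 from rfl, cohVec_r4]; exact conj_smul_row _ h4 k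
  · rw [show (⟨5, hi⟩ : Fin 6) = 5 from rfl, cohVec_r5]; exact conj_smul_row _ h5 k

lemma swap_sum (V : Fin 6 → Fin 3 → ℂ) (s t : Fin 6 → ℂ) :
    ∑ i, ∑ j, ((1/2 : ℂ) * ∑ k, V i k * V j k) * s i * t j
      = (1/2) * ∑ k, (∑ i, V i k * s i) * (∑ j, V j k * t j) := by
  simp only [Finset.mul_sum, Finset.sum_mul]
  calc ∑ i : Fin 6, ∑ j : Fin 6, ∑ k : Fin 3, (1/2 : ℂ) * (V i k * V j k) * s i * t j
      = ∑ i : Fin 6, ∑ k : Fin 3, ∑ j : Fin 6, (1/2 : ℂ) * (V i k * V j k) * s i * t j :=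
        Finset.sum_congr rfl fun i _ => Finset.sum_comm
    _ = ∑ k : Fin 3, ∑ i : Fin 6, ∑ j : Fin 6, (1/2 : ℂ) * (V i k * V j k) * s i * t j :=
        Finset.sum_comm
    _ = ∑ k : Fin 3, ∑ j : Fin 6, ∑ i : Fin 6, (1/2 : ℂ) * (V i k * V j k) * s i * t j :=
        Finset.sum_congr rfl fun k _ => Finset.sum_comm
    _ = ∑ k : Fin 3, ∑ j : Fin 6, ∑ i : Fin 6, (1/2 : ℂ) * (V i k * s i * (V j k * t j)) :=
        Finset.sum_congr rfl fun k _ => Finset.sum_congr rfl fun j _ =>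
          Finset.sum_congr rfl fun i _ => by ring

lemma sum0 (f : Fin 6 → ℂ) :
    ∑ i, cohVec i 0 * f i = ((Real.sqrt 2)⁻¹ : ℝ) * (f 0 + f 1 + f 3 + f 4) := by
  rw [Fin.sum_univ_six, cohVec_r0, cohVec_r1, cohVec_r2, cohVec_r3, cohVec_r4, cohVec_r5]
  simp only [Pi.smul_apply, Matrix.cons_val_zero, Matrix.cons_val_one, Matrix.head_cons,
    Complex.real_smul]
  ring

lemma sum1 (f : Fin 6 → ℂ) :
    ∑ i, cohVec i 1 * f i = ((Real.sqrt 2)⁻¹ : ℝ) * (f 0 + f 2 - f 3 + f 5) := by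
  rw [Fin.sum_univ_six, cohVec_r0, cohVec_r1, cohVec_r2, cohVec_r3, cohVec_r4, cohVec_r5]
  simp only [Pi.smul_apply, Matrix.cons_val_zero, Matrix.cons_val_one, Matrix.head_cons,
    Complex.real_smul]
  ring

lemma sum2 (f : Fin 6 → ℂ) :
    ∑ i, cohVec i 2 * f i = ((Real.sqrt 2)⁻¹ : ℝ) * (f 1 + f 2 - f 4 - f 5) := by
  rw [Fin.sum_univ_six, cohVec_r0, cohVec_r1, cohVec_r2, cohVec_r3, cohVec_r4, cohVec_r5]
  simp only [Pi.smul_apply, Matrix.cons_val_zero, Matrix.cons_val_one, Matrix.head_cons,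
    Matrix.cons_val_two, Matrix.tail_cons, Complex.real_smul]
  ring

/- ### Glue lemmas -/

lemma NU_id (c : ℝ) (f : Fin 6 → ℂ) :
    normSq ((c:ℂ)*(f 0+f 1+f 3+f 4)) + normSq ((c:ℂ)*(f 0+f 2-f 3+f 5))
      + normSq ((c:ℂ)*(f 1+f 2-f 4-f 5))
    = ((starRingEnd ℂ) (f 0) * ((c:ℂ)*(((c:ℂ)*(f 0+f 1+f 3+f 4))+((c:ℂ)*(f 0+f 2-f 3+f 5))))
      + (starRingEnd ℂ) (f 1) * ((c:ℂ)*(((c:ℂ)*(f 0+f 1+f 3+f 4))+((c:ℂ)*(f 1+f 2-f 4-f 5))))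
      + (starRingEnd ℂ) (f 2) * ((c:ℂ)*(((c:ℂ)*(f 0+f 2-f 3+f 5))+((c:ℂ)*(f 1+f 2-f 4-f 5))))
      + (starRingEnd ℂ) (f 3) * ((c:ℂ)*(((c:ℂ)*(f 0+f 1+f 3+f 4))-((c:ℂ)*(f 0+f 2-f 3+f 5))))
      + (starRingEnd ℂ) (f 4) * ((c:ℂ)*(((c:ℂ)*(f 0+f 1+f 3+f 4))-((c:ℂ)*(f 1+f 2-f 4-f 5))))
      + (starRingEnd ℂ) (f 5) * ((c:ℂ)*(((c:ℂ)*(f 0+f 2-f 3+f 5))-((c:ℂ)*(f 1+f 2-f 4-f 5))))).re := by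
  simp only [normSq_apply, mul_re, mul_im, add_re, add_im, sub_re, sub_im,
    ofReal_re, ofReal_im, conj_re, conj_im]
  ring

lemma term_bd (a z : ℂ) (c : ℝ) (ha : ‖a‖ ≤ 1) (hc : 0 ≤ c) :
    ((starRingEnd ℂ) a * ((c:ℂ)*z)).re ≤ c * ‖z‖ := by
  calc ((starRingEnd ℂ) a * ((c:ℂ)*z)).re ≤ ‖(starRingEnd ℂ) a * ((c:ℂ)*z)‖ :=
        Complex.re_le_norm _
    _ = ‖a‖ * (|c| * ‖z‖) := by
        rw [norm_mul, norm_mul, Complex.norm_conj, Complex.norm_real, Real.norm_eq_abs]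
    _ ≤ 1 * (c * ‖z‖) := by
        rw [_root_.abs_of_nonneg hc]
        exact mul_le_mul_of_nonneg_right ha (by positivity)
    _ = c * ‖z‖ := one_mul _

lemma cs3 (a0 a1 a2 b0 b1 b2 : ℝ) (h : 0 ≤ a0*b0 + a1*b1 + a2*b2) :
    a0*b0 + a1*b1 + a2*b2 ≤ Real.sqrt (a0^2+a1^2+a2^2) * Real.sqrt (b0^2+b1^2+b2^2) := by
  have hA : (Real.sqrt (a0^2+a1^2+a2^2))^2 = a0^2+a1^2+a2^2 := Real.sq_sqrt (by positivity)
  have hB : (Real.sqrt (b0^2+b1^2+b2^2))^2 = b0^2+b1^2+b2^2 := Real.sq_sqrt (by positivity)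
  nlinarith [sq_nonneg (a0*b1 - a1*b0), sq_nonneg (a0*b2 - a2*b0), sq_nonneg (a1*b2 - a2*b1),
    Real.sqrt_nonneg (a0^2+a1^2+a2^2), Real.sqrt_nonneg (b0^2+b1^2+b2^2),
    mul_nonneg (Real.sqrt_nonneg (a0^2+a1^2+a2^2)) (Real.sqrt_nonneg (b0^2+b1^2+b2^2))]

lemma boot (NU c m : ℝ) (hm0 : 0 ≤ m) (hm2 : m^2 = NU) (hc2 : c^2 = 1/2) (hc0 : 0 ≤ c)
    (h : NU ≤ c * ((2449/500) * m)) : NU ≤ 11995202/1000000 := by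
  nlinarith [sq_nonneg (m - (2449/500)*c), mul_nonneg hc0 hm0]

lemma sqrt_prod_bd (A B M : ℝ) (hM : 0 ≤ M) (hA : A ≤ M) (hB : B ≤ M) :
    Real.sqrt A * Real.sqrt B ≤ M := by
  calc Real.sqrt A * Real.sqrt B ≤ Real.sqrt M * Real.sqrt M :=
        mul_le_mul (Real.sqrt_le_sqrt hA) (Real.sqrt_le_sqrt hB) (Real.sqrt_nonneg _)
          (Real.sqrt_nonneg _)
    _ = M := Real.mul_self_sqrt hM

lemma NU_bound (c : ℝ) (hc2 : c^2 = 1/2) (hc0 : 0 ≤ c) (f : Fin 6 → ℂ)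
    (hf : ∀ i, ‖f i‖ ≤ 1) :
    normSq ((c:ℂ)*(f 0+f 1+f 3+f 4)) + normSq ((c:ℂ)*(f 0+f 2-f 3+f 5))
      + normSq ((c:ℂ)*(f 1+f 2-f 4-f 5)) ≤ 11995202/1000000 := by
  set U0 : ℂ := (c:ℂ)*(f 0+f 1+f 3+f 4) with hU0
  set U1 : ℂ := (c:ℂ)*(f 0+f 2-f 3+f 5) with hU1
  set U2 : ℂ := (c:ℂ)*(f 1+f 2-f 4-f 5) with hU2
  have hid := NU_id c f
  rw [← hU0, ← hU1, ← hU2] at hid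
  have hre : ((starRingEnd ℂ) (f 0) * ((c:ℂ)*(U0+U1)) + (starRingEnd ℂ) (f 1) * ((c:ℂ)*(U0+U2))
      + (starRingEnd ℂ) (f 2) * ((c:ℂ)*(U1+U2)) + (starRingEnd ℂ) (f 3) * ((c:ℂ)*(U0-U1))
      + (starRingEnd ℂ) (f 4) * ((c:ℂ)*(U0-U2)) + (starRingEnd ℂ) (f 5) * ((c:ℂ)*(U1-U2))).re
      = ((starRingEnd ℂ) (f 0) * ((c:ℂ)*(U0+U1))).re + ((starRingEnd ℂ) (f 1) * ((c:ℂ)*(U0+U2))).re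
      + ((starRingEnd ℂ) (f 2) * ((c:ℂ)*(U1+U2))).re + ((starRingEnd ℂ) (f 3) * ((c:ℂ)*(U0-U1))).re
      + ((starRingEnd ℂ) (f 4) * ((c:ℂ)*(U0-U2))).re + ((starRingEnd ℂ) (f 5) * ((c:ℂ)*(U1-U2))).re := by
    simp [Complex.add_re]
  have h1 : normSq U0 + normSq U1 + normSq U2
      ≤ c * ((‖U0+U1‖ + ‖U0-U1‖) + (‖U0+U2‖ + ‖U0-U2‖)
          + (‖U1+U2‖ + ‖U1-U2‖)) := by
    rw [hid, hre]
    have t0 := term_bd (f 0) (U0+U1) c (hf 0) hc0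
    have t1 := term_bd (f 1) (U0+U2) c (hf 1) hc0
    have t2 := term_bd (f 2) (U1+U2) c (hf 2) hc0
    have t3 := term_bd (f 3) (U0-U1) c (hf 3) hc0
    have t4 := term_bd (f 4) (U0-U2) c (hf 4) hc0
    have t5 := term_bd (f 5) (U1-U2) c (hf 5) hc0
    nlinarith [t0, t1, t2, t3, t4, t5]
  have hkey := key U0 U1 U2
  have hNU0 : 0 ≤ normSq U0 + normSq U1 + normSq U2 :=
    add_nonneg (add_nonneg (normSq_nonneg _) (normSq_nonneg _)) (normSq_nonneg _)
  have h2 : normSq U0 + normSq U1 + normSq U2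
      ≤ c * ((2449/500) * Real.sqrt (normSq U0 + normSq U1 + normSq U2)) := by
    calc normSq U0 + normSq U1 + normSq U2 ≤ _ := h1
      _ ≤ c * ((2449/500) * Real.sqrt (normSq U0 + normSq U1 + normSq U2)) :=
        mul_le_mul_of_nonneg_left hkey hc0
  exact boot _ c _ (Real.sqrt_nonneg _) (Real.sq_sqrt hNU0) hc2 hc0 h2

/- ### Main theorem -/

theorem g_cohProj_lt_six :
    sSup {x : ℝ | ∃ s t : Fin 6 → ℂ,
        (∀ i, ‖s i‖ ≤ 1) ∧ (∀ j, ‖t j‖ ≤ 1) ∧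
        x = ‖∑ i, ∑ j, cohProj i j * s i * t j‖} < 6 := by
  have hB : (5997601/1000000 : ℝ) < 6 := by norm_num
  refine lt_of_le_of_lt (Real.sSup_le ?_ (by norm_num)) hB
  rintro x ⟨sv, tv, hsv, htv, rfl⟩
  have hc0 : (0:ℝ) ≤ (Real.sqrt 2)⁻¹ := by positivity
  have hc2 : ((Real.sqrt 2)⁻¹)^2 = 1/2 := by
    rw [inv_pow, Real.sq_sqrt (by norm_num : (0:ℝ) ≤ 2)]
    norm_num
  have hproj : ∀ i j, cohProj i j = (1/2 : ℂ) * ∑ k, cohVec i k * cohVec j k := by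
    intro i j
    simp only [cohProj, Matrix.of_apply, cohVec_conj]
  have hE : (∑ i, ∑ j, cohProj i j * sv i * tv j)
      = 1/2 * ((∑ i, cohVec i 0 * sv i) * (∑ j, cohVec j 0 * tv j)
          + (∑ i, cohVec i 1 * sv i) * (∑ j, cohVec j 1 * tv j)
          + (∑ i, cohVec i 2 * sv i) * (∑ j, cohVec j 2 * tv j)) := by
    simp only [hproj]
    rw [swap_sum, Fin.sum_univ_three]
  rw [hE, sum0 sv, sum1 sv, sum2 sv, sum0 tv, sum1 tv, sum2 tv]
  set c : ℝ := (Real.sqrt 2)⁻¹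
  set A0 : ℂ := (c:ℂ)*(sv 0+sv 1+sv 3+sv 4) with hA0
  set A1 : ℂ := (c:ℂ)*(sv 0+sv 2-sv 3+sv 5) with hA1
  set A2 : ℂ := (c:ℂ)*(sv 1+sv 2-sv 4-sv 5) with hA2
  set B0 : ℂ := (c:ℂ)*(tv 0+tv 1+tv 3+tv 4) with hB0
  set B1 : ℂ := (c:ℂ)*(tv 0+tv 2-tv 3+tv 5) with hB1
  set B2 : ℂ := (c:ℂ)*(tv 1+tv 2-tv 4-tv 5) with hB2
  have hNU := NU_bound c hc2 hc0 sv hsv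
  have hNV := NU_bound c hc2 hc0 tv htv
  rw [← hA0, ← hA1, ← hA2] at hNU
  rw [← hB0, ← hB1, ← hB2] at hNV
  have habs2 : ‖(1:ℂ)/2‖ = 1/2 := by
    rw [norm_div]; simp
  have htri : ‖A0*B0 + A1*B1 + A2*B2‖
      ≤ ‖A0‖ * ‖B0‖ + ‖A1‖ * ‖B1‖
        + ‖A2‖ * ‖B2‖ := by
    calc ‖A0*B0 + A1*B1 + A2*B2‖
        ≤ ‖A0*B0 + A1*B1‖ + ‖A2*B2‖ := norm_add_le _ _
      _ ≤ ‖A0*B0‖ + ‖A1*B1‖ + ‖A2*B2‖ := by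
          linarith [norm_add_le (A0*B0) (A1*B1)]
      _ = _ := by rw [norm_mul A0 B0, norm_mul A1 B1, norm_mul A2 B2]
  have hcs : ‖A0‖ * ‖B0‖ + ‖A1‖ * ‖B1‖
      + ‖A2‖ * ‖B2‖
      ≤ Real.sqrt (normSq A0 + normSq A1 + normSq A2)
        * Real.sqrt (normSq B0 + normSq B1 + normSq B2) := by
    have := cs3 (‖A0‖) (‖A1‖) (‖A2‖)
      (‖B0‖) (‖B1‖) (‖B2‖) (by positivity)
    simpa only [Complex.sq_norm] using this
  have hprodbd : Real.sqrt (normSq A0 + normSq A1 + normSq A2)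
      * Real.sqrt (normSq B0 + normSq B1 + normSq B2) ≤ 11995202/1000000 :=
    sqrt_prod_bd _ _ _ (by norm_num) hNU hNV
  calc ‖1/2 * (A0*B0 + A1*B1 + A2*B2)‖
      = 1/2 * ‖A0*B0 + A1*B1 + A2*B2‖ := by rw [norm_mul, habs2]
    _ ≤ 1/2 * (11995202/1000000) := by
        have := le_trans htri (le_trans hcs hprodbd)
        linarith [norm_nonneg (A0*B0 + A1*B1 + A2*B2)]
    _ = 5997601/1000000 := by norm_num
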